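/- Consider two cars driving toward each other with speeds v_1 ≥ 0 and |v_2| ≥ 0, response time ρ > 0, acceleration bound a_acc > 0 and braking rates b_1, b_2 > 0. Car 1 travels at most D_1 = ((v_1 + v_{1,ρ})/2)·ρ + v_{1,ρ}²/(2·b_1) before stopping, where v_{1,ρ} = v_1 + ρ·a_acc; car 2 travels at most D_2 = ((|v_2| + v_{2,ρ})/2)·ρ + v_{2,ρ}²/(2·b_2) where v_{2,ρ} = |v_2| + ρ·a_acc. If the initial distance between them exceeds D_1 + D_2, then at every time the sum of the distances traveled by the two cars is strictly less than the initial distance, so they do not collide. -/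

import Mathlib

open Set

private lemma int_linear (c m a b : ℝ) :
    ∫ s in a..b, (c + m * s) = c * (b - a) + m * (b ^ 2 - a ^ 2) / 2 := by
  have key : ∫ s in a..b, (c + m * s)
      = (fun s => c * s + m * s ^ 2 / 2) b - (fun s => c * s + m * s ^ 2 / 2) a := by
    apply intervalIntegral.integral_eq_sub_of_hasDerivAt
    · intro x _
      have h : HasDerivAt (fun s : ℝ => c * s + m * s ^ 2 / 2)
          (c * 1 + m * ((2 : ℕ) * x ^ (2 - 1)) / 2) x :=
        (((hasDerivAt_id x).const_mul c)).add (((hasDerivAt_pow 2 x).const_mul m).div_const 2)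
      refine h.congr_deriv ?_
      push_cast
      ring
    · exact (by continuity : Continuous fun s : ℝ => c + m * s).intervalIntegrable a b
  rw [key]
  ring

private lemma car_dist_bound (v ρ a b : ℝ) (hv : 0 ≤ v) (hρ : 0 < ρ) (ha : 0 < a)
    (hb : 0 < b) (t : ℝ) (ht : 0 ≤ t) :
    (∫ s in (0:ℝ)..t, (fun s => if s ≤ ρ then v + a * s
        else max 0 (v + ρ * a - b * (s - ρ))) s)
      ≤ ((v + (v + ρ * a)) / 2) * ρ + (v + ρ * a) ^ 2 / (2 * b) := by
  set w : ℝ := v + ρ * a with hw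
  have hw0 : 0 < w := by positivity
  set vel : ℝ → ℝ := fun s => if s ≤ ρ then v + a * s else max 0 (w - b * (s - ρ)) with hvel
  clear_value w vel
  have hcont : Continuous vel := by
    rw [hvel]
    apply Continuous.if_le (by continuity) (continuous_const.max (by continuity))
      continuous_id continuous_const
    intro x hx
    simp only [id_eq] at hx
    rw [hx]
    simp only [sub_self, mul_zero, sub_zero]
    rw [max_eq_right hw0.le, hw]
    ring
  have hint : ∀ x y : ℝ, IntervalIntegrable vel MeasureTheory.volume x y :=
    fun x y => hcont.intervalIntegrable x y
  have hb2 : (0:ℝ) < 2 * b := by linarith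
  rcases le_or_gt t ρ with htρ | htρ
  · -- t ≤ ρ
    have hcongr : (∫ s in (0:ℝ)..t, vel s) = ∫ s in (0:ℝ)..t, (v + a * s) := by
      apply intervalIntegral.integral_congr
      intro s hs
      rw [uIcc_of_le ht] at hs
      have : s ≤ ρ := le_trans hs.2 htρ
      simp [hvel, this]
    rw [hcongr, int_linear, hw]
    have h2 : 0 ≤ (v + ρ * a) ^ 2 / (2 * b) := by positivity
    nlinarith [mul_nonneg hv (sub_nonneg.2 htρ),
      mul_nonneg ha.le (mul_nonneg (sub_nonneg.2 htρ) (by linarith : (0:ℝ) ≤ ρ + t))]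
  · -- t > ρ : split at ρ
    rw [← intervalIntegral.integral_add_adjacent_intervals (hint 0 ρ) (hint ρ t)]
    have h1 : (∫ s in (0:ℝ)..ρ, vel s) = v * ρ + a * ρ ^ 2 / 2 := by
      have hc : (∫ s in (0:ℝ)..ρ, vel s) = ∫ s in (0:ℝ)..ρ, (v + a * s) := by
        apply intervalIntegral.integral_congr
        intro s hs
        rw [uIcc_of_le hρ.le] at hs
        simp [hvel, hs.2]
      rw [hc, int_linear]
      ring
    have key : (∫ s in ρ..t, vel s) ≤ w ^ 2 / (2 * b) := by
      set T : ℝ := ρ + w / b with hT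
      clear_value T
      have hwb : 0 < w / b := div_pos hw0 hb
      have hTρ : ρ < T := by rw [hT]; linarith
      have hbT : b * (T - ρ) = w := by
        rw [hT]
        field_simp
        ring
      have linval : ∀ x y : ℝ, ρ ≤ x → x ≤ y →
          (∀ s, x ≤ s → s ≤ y → 0 ≤ w - b * (s - ρ)) →
          (∫ s in x..y, vel s)
            = (w + b * ρ) * (y - x) + (-b) * (y ^ 2 - x ^ 2) / 2 := by
        intro x y hx hxy hpos
        have hc : (∫ s in x..y, vel s) = ∫ s in x..y, ((w + b * ρ) + (-b) * s) := by
          apply intervalIntegral.integral_congr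
          intro s hs
          rw [uIcc_of_le hxy] at hs
          have hge : 0 ≤ w - b * (s - ρ) := hpos s hs.1 hs.2
          rcases lt_or_eq_of_le (le_trans hx hs.1) with h | h
          · simp only [hvel, if_neg (not_le.mpr h), max_eq_right hge]
            ring
          · rw [← h]
            simp only [hvel, if_pos le_rfl]
            rw [hw]
            ring
        rw [hc, int_linear]
      rcases le_or_gt t T with htT | htT
      · have hval := linval ρ t le_rfl htρ.le (by
          intro s hs1 hs2
          have h1 : b * (s - ρ) ≤ b * (T - ρ) :=
            mul_le_mul_of_nonneg_left (by linarith) hb.le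
          linarith [hbT])
        rw [hval, le_div_iff₀ hb2]
        nlinarith [sq_nonneg (w - b * (t - ρ))]
      · rw [← intervalIntegral.integral_add_adjacent_intervals (hint ρ T) (hint T t)]
        have hA := linval ρ T le_rfl hTρ.le (by
          intro s hs1 hs2
          have h1 : b * (s - ρ) ≤ b * (T - ρ) :=
            mul_le_mul_of_nonneg_left (by linarith) hb.le
          linarith [hbT])
        have hB : (∫ s in T..t, vel s) = 0 := by
          have hc : (∫ s in T..t, vel s) = ∫ s in T..t, (0:ℝ) := by
            apply intervalIntegral.integral_congr
            intro s hs
            rw [uIcc_of_le htT.le] at hs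
            have hsρ : ¬ s ≤ ρ := not_le.mpr (lt_of_lt_of_le hTρ hs.1)
            have hle : w - b * (s - ρ) ≤ 0 := by
              have h2 : b * (T - ρ) ≤ b * (s - ρ) :=
                mul_le_mul_of_nonneg_left (by linarith [hs.1]) hb.le
              linarith [hbT]
            simp only [hvel, if_neg hsρ, max_eq_left hle]
          rw [hc]
          simp
        have hval : (w + b * ρ) * (T - ρ) + (-b) * (T ^ 2 - ρ ^ 2) / 2 = w ^ 2 / (2 * b) := by
          rw [hT]
          field_simp
          ring
        rw [hA, hB, hval]
        linarith
    rw [h1]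
    have : ((v + w) / 2) * ρ = v * ρ + a * ρ ^ 2 / 2 := by rw [hw]; ring
    linarith [key]

/-- Two cars driving toward each other: if the initial gap exceeds the sum of the two
worst-case stopping distances, then at every time the sum of distances traveled is
strictly less than the initial gap, so no collision occurs. -/
theorem opposite_directions_no_collision (v₁ v₂ ρ a_acc b₁ b₂ d : ℝ)
    (hv1 : 0 ≤ v₁) (hv2 : 0 ≤ v₂) (hρ : 0 < ρ) (hacc : 0 < a_acc)
    (hb1 : 0 < b₁) (hb2 : 0 < b₂)
    (vel₁ vel₂ : ℝ → ℝ) (dist₁ dist₂ : ℝ → ℝ)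
    (hvel1 : vel₁ = fun t => if t ≤ ρ then v₁ + a_acc * t
        else max 0 (v₁ + ρ * a_acc - b₁ * (t - ρ)))
    (hvel2 : vel₂ = fun t => if t ≤ ρ then v₂ + a_acc * t
        else max 0 (v₂ + ρ * a_acc - b₂ * (t - ρ)))
    (hd1 : dist₁ = fun t => ∫ s in (0:ℝ)..t, vel₁ s)
    (hd2 : dist₂ = fun t => ∫ s in (0:ℝ)..t, vel₂ s)
    (hgap : d > ((v₁ + (v₁ + ρ * a_acc)) / 2) * ρ + (v₁ + ρ * a_acc) ^ 2 / (2 * b₁)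
        + ((v₂ + (v₂ + ρ * a_acc)) / 2) * ρ + (v₂ + ρ * a_acc) ^ 2 / (2 * b₂)) :
    ∀ t, 0 ≤ t → dist₁ t + dist₂ t < d := by
  intro t ht
  subst hvel1 hvel2 hd1 hd2
  have h1 := car_dist_bound v₁ ρ a_acc b₁ hv1 hρ hacc hb1 t ht
  have h2 := car_dist_bound v₂ ρ a_acc b₂ hv2 hρ hacc hb2 t ht
  simp only at h1 h2 ⊢
  linarith
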